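/- arXiv:2401.14710 — 3 statements merged into one kernel-verified Lean document; each statement's English description precedes it below -/
import Mathlib

section
/- For every t in (0,1], the binary entropy function h satisfies t ≤ (1 - 2·h⁻¹(1-t))², where h⁻¹ denotes the inverse of h restricted to [0,1/2]. Equivalently, the SDPI coefficient η_t = (1 - 2·h⁻¹(1-t))² of a BSC with capacity t satisfies η_t ≥ t. -/
/-- Binary entropy function (base-2 logarithms). -/
noncomputable def hbin (x : ℝ) : ℝ := -x * Real.logb 2 x - (1 - x) * Real.logb 2 (1 - x)

open Real Set

/-- Auxiliary function: `g(s) = 2 ln 2 · s² - (1+s)ln(1+s) - (1-s)ln(1-s)`. -/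
noncomputable def gAux (s : ℝ) : ℝ :=
  2 * Real.log 2 * s ^ 2 - (1 + s) * Real.log (1 + s) - (1 - s) * Real.log (1 - s)

/-- Derivative of `gAux`. -/
noncomputable def gAux' (s : ℝ) : ℝ :=
  4 * Real.log 2 * s - Real.log (1 + s) + Real.log (1 - s)

lemma gAux_hasDerivAt {s : ℝ} (h1 : -1 < s) (h2 : s < 1) :
    HasDerivAt gAux (gAux' s) s := by
  have hp : (1 : ℝ) + s ≠ 0 := by linarith
  have hm : (1 : ℝ) - s ≠ 0 := by linarith
  have dp : HasDerivAt (fun x : ℝ => 1 + x) 1 s := by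
    simpa using (hasDerivAt_id s).const_add (1 : ℝ)
  have dm : HasDerivAt (fun x : ℝ => 1 - x) (-1) s := by
    simpa using (hasDerivAt_id s).const_sub (1 : ℝ)
  have dlp : HasDerivAt (fun x : ℝ => Real.log (1 + x)) (1 / (1 + s)) s := by
    exact ((Real.hasDerivAt_log hp).comp s dp).congr_deriv (by simp)
  have dlm : HasDerivAt (fun x : ℝ => Real.log (1 - x)) (1 / (1 - s) * (-1)) s := by
    exact ((Real.hasDerivAt_log hm).comp s dm).congr_deriv (by simp)
  have d1 : HasDerivAt (fun x : ℝ => 2 * Real.log 2 * x ^ 2)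
      (2 * Real.log 2 * (2 * s)) s := by
    simpa [mul_comm, mul_assoc, mul_left_comm] using
      ((hasDerivAt_pow 2 s).const_mul (2 * Real.log 2))
  have d2 : HasDerivAt (fun x : ℝ => (1 + x) * Real.log (1 + x))
      (1 * Real.log (1 + s) + (1 + s) * (1 / (1 + s))) s := dp.mul dlp
  have d3 : HasDerivAt (fun x : ℝ => (1 - x) * Real.log (1 - x))
      ((-1) * Real.log (1 - s) + (1 - s) * (1 / (1 - s) * (-1))) s := dm.mul dlm
  have := (d1.sub d2).sub d3
  refine this.congr_deriv ?_
  unfold gAux'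
  field_simp [gAux']
  ring

lemma gAux'_hasDerivAt {s : ℝ} (h1 : -1 < s) (h2 : s < 1) :
    HasDerivAt gAux' (4 * Real.log 2 - 1 / (1 + s) - 1 / (1 - s)) s := by
  have hp : (1 : ℝ) + s ≠ 0 := by linarith
  have hm : (1 : ℝ) - s ≠ 0 := by linarith
  have dp : HasDerivAt (fun x : ℝ => 1 + x) 1 s := by
    simpa using (hasDerivAt_id s).const_add (1 : ℝ)
  have dm : HasDerivAt (fun x : ℝ => 1 - x) (-1) s := by
    simpa using (hasDerivAt_id s).const_sub (1 : ℝ)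
  have dlp : HasDerivAt (fun x : ℝ => Real.log (1 + x)) (1 / (1 + s)) s := by
    exact ((Real.hasDerivAt_log hp).comp s dp).congr_deriv (by simp)
  have dlm : HasDerivAt (fun x : ℝ => Real.log (1 - x)) (1 / (1 - s) * (-1)) s := by
    exact ((Real.hasDerivAt_log hm).comp s dm).congr_deriv (by simp)
  have d1 : HasDerivAt (fun x : ℝ => 4 * Real.log 2 * x) (4 * Real.log 2) s := by
    simpa using (hasDerivAt_id s).const_mul (4 * Real.log 2)
  have := (d1.sub dlp).add dlm
  refine this.congr_deriv ?_
  ring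

lemma gAux_continuous : Continuous gAux := by
  have h1 : Continuous fun s : ℝ => (1 + s) * Real.log (1 + s) :=
    Real.continuous_mul_log.comp (continuous_const.add continuous_id)
  have h2 : Continuous fun s : ℝ => (1 - s) * Real.log (1 - s) :=
    Real.continuous_mul_log.comp (continuous_const.sub continuous_id)
  exact ((continuous_const.mul (continuous_pow 2)).sub h1).sub h2

lemma log_two_gt_half : (1 / 2 : ℝ) < Real.log 2 := by
  have := Real.log_two_gt_d9
  linarith

/-- The key inequality: `(1+s)ln(1+s) + (1-s)ln(1-s) ≤ 2 ln 2 · s²` on `[0,1]`. -/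
lemma gAux_nonneg {s : ℝ} (hs0 : 0 ≤ s) (hs1 : s ≤ 1) : 0 ≤ gAux s := by
  have hl2 : (1 / 2 : ℝ) < Real.log 2 := log_two_gt_half
  set c : ℝ := Real.sqrt (1 - 1 / (2 * Real.log 2)) with hc
  have hinner0 : 0 < 1 - 1 / (2 * Real.log 2) := by
    have h2 : (1 : ℝ) < 2 * Real.log 2 := by linarith
    have : 1 / (2 * Real.log 2) < 1 := by
      rw [div_lt_one (by linarith)]
      exact h2
    linarith
  have hinner1 : 1 - 1 / (2 * Real.log 2) < 1 := by
    have : 0 < 1 / (2 * Real.log 2) := by positivity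
    linarith
  have hc0 : 0 < c := Real.sqrt_pos.mpr hinner0
  have hc1 : c < 1 := by
    have := Real.sqrt_lt_sqrt hinner0.le hinner1
    simpa [hc] using this
  have hcsq : c ^ 2 = 1 - 1 / (2 * Real.log 2) := by
    rw [hc, sq, Real.mul_self_sqrt hinner0.le]
  -- continuity of gAux' on sets avoiding ±1
  have hcont' : ∀ a b : ℝ, -1 < a → b < 1 → ContinuousOn gAux' (Icc a b) := by
    intro a b ha hb x hx
    have hxp : (1 : ℝ) + x ≠ 0 := by have := hx.1; have := hx.2; intro h; linarith
    have hxm : (1 : ℝ) - x ≠ 0 := by have := hx.1; have := hx.2; intro h; linarith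
    apply ContinuousAt.continuousWithinAt
    have c1 : ContinuousAt (fun y : ℝ => Real.log (1 + y)) x :=
      (Real.continuousAt_log hxp).comp (continuous_const.add continuous_id).continuousAt
    have c2 : ContinuousAt (fun y : ℝ => Real.log (1 - y)) x :=
      (Real.continuousAt_log hxm).comp (continuous_const.sub continuous_id).continuousAt
    exact (((continuous_const.mul continuous_id).continuousAt).sub c1).add c2
  -- Region 1 : gAux' is monotone on [0, c], hence nonneg, hence gAux monotone, hence nonneg
  have hmono' : MonotoneOn gAux' (Icc 0 c) := by
    apply monotoneOn_of_hasDerivWithinAt_nonneg (convex_Icc 0 c)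
      (hcont' 0 c (by norm_num) hc1)
      (f' := fun x => 4 * Real.log 2 - 1 / (1 + x) - 1 / (1 - x))
    · intro x hx
      rw [interior_Icc] at hx
      exact (gAux'_hasDerivAt (by linarith [hx.1]) (by linarith [hx.2, hc1])).hasDerivWithinAt
    · intro x hx
      rw [interior_Icc] at hx
      have hx0 : 0 < x := hx.1
      have hxc : x < c := hx.2
      have hx1 : x < 1 := lt_trans hxc hc1
      have hxsq : x ^ 2 < c ^ 2 := by nlinarith
      have h1 : 1 / (2 * Real.log 2) < 1 - x ^ 2 := by rw [hcsq] at hxsq; linarith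
      have hpos : 0 < 1 - x ^ 2 := by nlinarith
      have hp1 : (0:ℝ) < 1 + x := by linarith
      have hm1 : (0:ℝ) < 1 - x := by linarith
      have key : 1 / (1 + x) + 1 / (1 - x) ≤ 4 * Real.log 2 := by
        rw [div_add_div _ _ hp1.ne' hm1.ne', div_le_iff₀ (by positivity)]
        rw [div_lt_iff₀ (by linarith : (0:ℝ) < 2 * Real.log 2)] at h1
        nlinarith [h1]
      linarith
  have hg'0 : gAux' 0 = 0 := by simp [gAux']
  have hg'nonneg : ∀ x ∈ interior (Icc (0:ℝ) c), 0 ≤ gAux' x := by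
    intro x hx
    rw [interior_Icc] at hx
    have := hmono' (left_mem_Icc.mpr hc0.le) ⟨hx.1.le, hx.2.le⟩ hx.1.le
    rw [hg'0] at this
    exact this
  have hmono : MonotoneOn gAux (Icc 0 c) := by
    apply monotoneOn_of_hasDerivWithinAt_nonneg (convex_Icc 0 c)
      (gAux_continuous.continuousOn) (f' := gAux')
    · intro x hx
      rw [interior_Icc] at hx
      exact (gAux_hasDerivAt (by linarith [hx.1]) (by linarith [hx.2, hc1])).hasDerivWithinAt
    · exact hg'nonneg
  have hg0 : gAux 0 = 0 := by simp [gAux]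
  have hreg1 : ∀ x ∈ Icc (0:ℝ) c, 0 ≤ gAux x := by
    intro x hx
    have := hmono (left_mem_Icc.mpr hc0.le) hx hx.1
    rw [hg0] at this
    exact this
  -- Region 2 : gAux is concave on [c, 1]
  have hconc : ConcaveOn ℝ (Icc c 1) gAux := by
    apply concaveOn_of_hasDerivWithinAt2_nonpos (convex_Icc c 1)
      (gAux_continuous.continuousOn) (f' := gAux')
      (f'' := fun x => 4 * Real.log 2 - 1 / (1 + x) - 1 / (1 - x))
    · intro x hx
      rw [interior_Icc] at hx
      exact (gAux_hasDerivAt (by linarith [hx.1, hc0]) hx.2).hasDerivWithinAt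
    · intro x hx
      rw [interior_Icc] at hx
      exact (gAux'_hasDerivAt (by linarith [hx.1, hc0]) hx.2).hasDerivWithinAt
    · intro x hx
      rw [interior_Icc] at hx
      have hx0 : 0 < x := lt_trans hc0 hx.1
      have hx1 : x < 1 := hx.2
      have hxsq : c ^ 2 < x ^ 2 := by nlinarith [hx.1, hc0, mul_pos (sub_pos.mpr hx.1) (by linarith [hx.1, hc0] : (0:ℝ) < x + c)]
      have h1 : 1 - x ^ 2 < 1 / (2 * Real.log 2) := by rw [hcsq] at hxsq; linarith
      have hpos : 0 < 1 - x ^ 2 := by nlinarith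
      have hp1 : (0:ℝ) < 1 + x := by linarith
      have hm1 : (0:ℝ) < 1 - x := by linarith
      have key : 4 * Real.log 2 ≤ 1 / (1 + x) + 1 / (1 - x) := by
        rw [div_add_div _ _ hp1.ne' hm1.ne', le_div_iff₀ (by positivity)]
        rw [lt_div_iff₀ (by linarith : (0:ℝ) < 2 * Real.log 2)] at h1
        nlinarith [h1]
      linarith
  have hg1 : gAux 1 = 0 := by
    norm_num [gAux]
  have hreg2 : ∀ x ∈ Icc c 1, 0 ≤ gAux x := by
    intro x hx
    have hseg : x ∈ segment ℝ c 1 := by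
      rw [segment_eq_Icc hc1.le]
      exact hx
    have := hconc.ge_on_segment (left_mem_Icc.mpr hc1.le) (right_mem_Icc.mpr hc1.le) hseg
    have hgc : 0 ≤ gAux c := hreg1 c (right_mem_Icc.mpr hc0.le)
    rw [hg1] at this
    exact le_trans (le_min hgc le_rfl) this
  by_cases h : s ≤ c
  · exact hreg1 s ⟨hs0, h⟩
  · exact hreg2 s ⟨le_of_not_ge h, hs1⟩

/-- The entropy inequality `4p(1-p) ≤ h(p)` on `[0, 1/2]`. -/
lemma four_mul_le_hbin {p : ℝ} (hp0 : 0 ≤ p) (hp2 : p ≤ 1 / 2) :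
    4 * p * (1 - p) ≤ hbin p := by
  rcases eq_or_lt_of_le hp0 with h0 | h0
  · simp [hbin, ← h0]
  have hl2 : 0 < Real.log 2 := Real.log_pos (by norm_num)
  set s : ℝ := 1 - 2 * p with hs
  have hs0 : 0 ≤ s := by rw [hs]; linarith
  have hs1 : s ≤ 1 := by rw [hs]; linarith
  have key := gAux_nonneg hs0 hs1
  have h1p : (0:ℝ) < 1 - p := by linarith
  have e1 : Real.log (1 + s) = Real.log 2 + Real.log (1 - p) := by
    rw [show (1:ℝ) + s = 2 * (1 - p) by rw [hs]; ring,
      Real.log_mul (by norm_num) h1p.ne']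
  have e2 : Real.log (1 - s) = Real.log 2 + Real.log p := by
    rw [show (1:ℝ) - s = 2 * p by rw [hs]; ring,
      Real.log_mul (by norm_num) h0.ne']
  rw [gAux, e1, e2, hs] at key
  have hbe : hbin p = (-p * Real.log p - (1 - p) * Real.log (1 - p)) / Real.log 2 := by
    simp only [hbin, Real.logb]
    ring
  rw [hbe, le_div_iff₀ hl2]
  nlinarith [key]

/-- For every `t ∈ (0,1]`, `t ≤ (1 - 2 h⁻¹(1-t))²`, where `hinv` is the inverse of the
binary entropy function restricted to `[0,1/2]`. -/
theorem sdpi_coeff_ge_capacity (hinv : ℝ → ℝ)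
    (hhinv : ∀ y ∈ Set.Icc (0:ℝ) 1, hinv y ∈ Set.Icc (0:ℝ) (1/2) ∧ hbin (hinv y) = y)
    (t : ℝ) (ht0 : 0 < t) (ht1 : t ≤ 1) :
    t ≤ (1 - 2 * hinv (1 - t))^2 := by
  obtain ⟨⟨hp0, hp2⟩, hpe⟩ := hhinv (1 - t) ⟨by linarith, by linarith⟩
  have h4 := four_mul_le_hbin hp0 hp2
  rw [hpe] at h4
  nlinarith [h4]
end

section
/- For every t in (0,1], the ratio α_t = t / (1 - 2·h⁻¹(1-t))² satisfies α_t > log₂(e)/2. -/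
section AlphaAux
open Real

/-- `log(1+s) - log(1-s) > 2s` on `(0,1)`. -/
lemma log_diff_gt (s : ℝ) (hs : s ∈ Set.Ioo (0:ℝ) 1) :
    2 * s < Real.log (1 + s) - Real.log (1 - s) := by
  obtain ⟨hs0, hs1⟩ := hs
  set f : ℝ → ℝ := fun x => Real.log (1 + x) - Real.log (1 - x) - 2 * x with hf
  have hderiv : ∀ x ∈ Set.Ioo (0:ℝ) 1, HasDerivAt f (1/(1+x) + 1/(1-x) - 2) x := by
    intro x ⟨hx0, hx1⟩
    have h1 : HasDerivAt (fun y : ℝ => Real.log (1 + y)) (1/(1+x)) x := by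
      have := ((hasDerivAt_id x).const_add 1).log (by simp only [id_eq]; nlinarith)
      simpa using this
    have h2 : HasDerivAt (fun y : ℝ => Real.log (1 - y)) (-1/(1-x)) x := by
      have := ((hasDerivAt_id x).const_sub 1).log (by simp only [id_eq]; nlinarith)
      simpa using this
    have := ((h1.sub h2).sub ((hasDerivAt_id x).const_mul 2))
    refine this.congr_deriv ?_
    field_simp
    ring
  have hmono : StrictMonoOn f (Set.Ico (0:ℝ) 1) := by
    apply strictMonoOn_of_deriv_pos (convex_Ico 0 1)
    · apply ContinuousOn.sub
      apply ContinuousOn.sub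
      · exact ContinuousOn.log (by fun_prop) (fun x ⟨hx0, hx1⟩ => by nlinarith)
      · exact ContinuousOn.log (by fun_prop) (fun x ⟨hx0, hx1⟩ => by nlinarith)
      · fun_prop
    · intro x hx
      rw [interior_Ico] at hx
      rw [(hderiv x hx).deriv]
      obtain ⟨hx0, hx1⟩ := hx
      have h1 : (0:ℝ) < 1 + x := by linarith
      have h2 : (0:ℝ) < 1 - x := by linarith
      rw [div_add_div _ _ (ne_of_gt h1) (ne_of_gt h2)]
      rw [lt_sub_iff_add_lt, zero_add, lt_div_iff₀ (by positivity)]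
      nlinarith
  have := hmono (Set.left_mem_Ico.2 one_pos) (Set.mem_Ico.2 ⟨le_of_lt hs0, hs1⟩) hs0
  simp only [hf, Real.log_one] at this
  norm_num at this
  linarith

/-- Pinsker-type: `(1+s)log(1+s) + (1-s)log(1-s) > s²` on `(0,1)`. -/
lemma pinsker_core (s : ℝ) (hs : s ∈ Set.Ioo (0:ℝ) 1) :
    s^2 < (1 + s) * Real.log (1 + s) + (1 - s) * Real.log (1 - s) := by
  obtain ⟨hs0, hs1⟩ := hs
  set f : ℝ → ℝ := fun x => (1 + x) * Real.log (1 + x) + (1 - x) * Real.log (1 - x) - x^2 with hf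
  have hderiv : ∀ x ∈ Set.Ioo (0:ℝ) 1,
      HasDerivAt f (Real.log (1 + x) - Real.log (1 - x) - 2 * x) x := by
    intro x ⟨hx0, hx1⟩
    have e1 : (0:ℝ) < 1 + x := by linarith
    have e2 : (0:ℝ) < 1 - x := by linarith
    have h1 : HasDerivAt (fun y : ℝ => Real.log (1 + y)) (1/(1+x)) x := by
      have := ((hasDerivAt_id x).const_add 1).log (ne_of_gt e1)
      simpa using this
    have h2 : HasDerivAt (fun y : ℝ => Real.log (1 - y)) (-1/(1-x)) x := by
      have := ((hasDerivAt_id x).const_sub 1).log (ne_of_gt e2)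
      simpa using this
    have h3 : HasDerivAt (fun y : ℝ => (1 + y) * Real.log (1 + y))
        (1 * Real.log (1+x) + (1+x) * (1/(1+x))) x :=
      ((hasDerivAt_id x).const_add 1).mul h1
    have h4 : HasDerivAt (fun y : ℝ => (1 - y) * Real.log (1 - y))
        ((-1) * Real.log (1-x) + (1-x) * (-1/(1-x))) x :=
      ((hasDerivAt_id x).const_sub 1).mul h2
    have h5 : HasDerivAt (fun y : ℝ => y^2) (2*x) x := by
      simpa using (hasDerivAt_pow 2 x)
    have := (h3.add h4).sub h5
    refine this.congr_deriv ?_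
    field_simp
    ring
  have hmono : StrictMonoOn f (Set.Ico (0:ℝ) 1) := by
    apply strictMonoOn_of_deriv_pos (convex_Ico 0 1)
    · apply ContinuousOn.sub
      apply ContinuousOn.add
      · exact ContinuousOn.mul (by fun_prop)
          (ContinuousOn.log (by fun_prop) (fun x ⟨hx0, hx1⟩ => by nlinarith))
      · exact ContinuousOn.mul (by fun_prop)
          (ContinuousOn.log (by fun_prop) (fun x ⟨hx0, hx1⟩ => by nlinarith))
      · fun_prop
    · intro x hx
      rw [interior_Ico] at hx
      rw [(hderiv x hx).deriv]
      have := log_diff_gt x hx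
      linarith
  have := hmono (Set.left_mem_Ico.2 one_pos) (Set.mem_Ico.2 ⟨le_of_lt hs0, hs1⟩) hs0
  simp only [hf, Real.log_one] at this
  norm_num at this
  linarith
end AlphaAux


/-- For every `t ∈ (0,1]`, `α_t = t / (1 - 2 h⁻¹(1-t))²  >  log₂(e)/2`. -/
theorem alpha_gt_half_log2e (hinv : ℝ → ℝ)
    (hhinv : ∀ y ∈ Set.Icc (0:ℝ) 1, hinv y ∈ Set.Icc (0:ℝ) (1/2) ∧ hbin (hinv y) = y)
    (t : ℝ) (ht0 : 0 < t) (ht1 : t ≤ 1) :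
    Real.logb 2 (Real.exp 1) / 2 < t / (1 - 2 * hinv (1 - t))^2 := by
  have hmem : (1 - t) ∈ Set.Icc (0:ℝ) 1 := ⟨by linarith, by linarith⟩
  obtain ⟨⟨hx0, hx12⟩, hval⟩ := hhinv (1 - t) hmem
  set x := hinv (1 - t) with hxdef
  clear_value x
  have hL : (0:ℝ) < Real.log 2 := Real.log_pos (by norm_num)
  have hlogb : Real.logb 2 (Real.exp 1) = 1 / Real.log 2 := by
    rw [Real.logb, Real.log_exp]
  have hbx : ∀ z : ℝ, hbin z = (-z * Real.log z - (1-z)*Real.log (1-z)) / Real.log 2 := by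
    intro z; simp only [hbin, Real.logb]; ring
  have hxlt : x < 1/2 := by
    rcases lt_or_eq_of_le hx12 with h | h
    · exact h
    · exfalso
      have h1 : hbin (1/2 : ℝ) = 1 := by
        rw [hbx, show (1:ℝ) - 1/2 = 1/2 by norm_num, show (1:ℝ)/2 = 2⁻¹ by norm_num,
          Real.log_inv]
        field_simp
        norm_num
      rw [h] at hval
      rw [h1] at hval
      linarith
  have ht : t = 1 - hbin x := by linarith
  rcases eq_or_lt_of_le hx0 with h0 | h0
  · -- x = 0, so t = 1
    have hb0 : hbin (0:ℝ) = 0 := by rw [hbx]; norm_num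
    have ht1' : t = 1 := by rw [← h0, hb0] at ht; linarith
    rw [hlogb, ← h0, ht1']
    norm_num
    have h2 : (Real.log 2)⁻¹ * Real.log 2 = 1 := inv_mul_cancel₀ (ne_of_gt hL)
    nlinarith [Real.log_two_gt_d9, h2]
  · set s : ℝ := 1 - 2*x with hsdef
    clear_value s
    have hs : s ∈ Set.Ioo (0:ℝ) 1 := ⟨by simp [hsdef]; linarith, by simp [hsdef]; linarith⟩
    have hp := pinsker_core s hs
    have e1 : 1 + s = 2*(1-x) := by rw [hsdef]; ring
    have e2 : 1 - s = 2*x := by rw [hsdef]; ring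
    rw [e1, e2, Real.log_mul two_ne_zero (by linarith), Real.log_mul two_ne_zero (ne_of_gt h0)] at hp
    have key : s^2 < 2*Real.log 2 + 2*x*Real.log x + 2*(1-x)*Real.log (1-x) := by nlinarith
    have hs2 : (0:ℝ) < s^2 := pow_pos hs.1 2
    rw [hlogb, lt_div_iff₀ hs2, ht, hbx]
    have hrw : 1 - (-x * Real.log x - (1-x)*Real.log (1-x)) / Real.log 2
        = (Real.log 2 + x * Real.log x + (1-x)*Real.log (1-x)) / Real.log 2 := by
      field_simp
      ring
    rw [hrw, show 1 / Real.log 2 / 2 * s^2 = (s^2/2) / Real.log 2 by ring]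
    apply div_lt_div_of_pos_right ?_ hL
    linarith
end

section
/- For fixed p ∈ [0,1/2], the function g(t) = h(p ⋆ h⁻¹(1-t)) - (1-t) on [0,1] is convex in t, where a ⋆ b = a(1-b) + b(1-a). Consequently, since g(0)=0 and g(1)=h(p), it holds that g(t) ≤ t·h(p) for all t ∈ [0,1]. -/
/-- Binary convolution `a ⋆ b = a(1-b) + b(1-a)`. -/
def bconv (a b : ℝ) : ℝ := a * (1 - b) + b * (1 - a)

open Real Set

noncomputable def Lf (x : ℝ) : ℝ := Real.log (1 - x) - Real.log x
noncomputable def Nf (x : ℝ) : ℝ := -(x * Real.log x) - (1 - x) * Real.log (1 - x)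
noncomputable def Mf (x : ℝ) : ℝ := x * (1 - x) * Lf x

lemma hbin_eq : hbin = fun x => Nf x / Real.log 2 := by
  funext x
  simp only [hbin, Nf, Real.logb]
  ring

lemma continuous_Nf : Continuous Nf := by
  have h := Real.continuous_mul_log
  exact h.neg.sub (h.comp (continuous_const.sub continuous_id))

lemma continuous_hbin : Continuous hbin := by
  rw [hbin_eq]; exact continuous_Nf.div_const _

lemma hasDerivAt_Nf {x : ℝ} (hx : x ∈ Ioo (0:ℝ) 1) : HasDerivAt Nf (Lf x) x := by
  have hx0 : x ≠ 0 := ne_of_gt hx.1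
  have hx1 : (1:ℝ) - x ≠ 0 := by have := hx.2; intro h; linarith [h]
  have h1 : HasDerivAt (fun y : ℝ => y * Real.log y) (Real.log x + 1) x :=
    Real.hasDerivAt_mul_log hx0
  have hinner : HasDerivAt (fun y : ℝ => 1 - y) (-1) x := by
    simpa using (hasDerivAt_id x).const_sub 1
  have h2 : HasDerivAt (fun y : ℝ => (1 - y) * Real.log (1 - y))
      ((Real.log (1 - x) + 1) * (-1)) x :=
    (Real.hasDerivAt_mul_log hx1).comp x hinner
  have h3 := h1.neg.sub h2
  have : Nf = fun y : ℝ => -(y * Real.log y) - (1 - y) * Real.log (1 - y) := rfl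
  rw [this]
  refine h3.congr_deriv ?_
  unfold Lf; ring

lemma hasDerivAt_hbin {x : ℝ} (hx : x ∈ Ioo (0:ℝ) 1) :
    HasDerivAt hbin (Lf x / Real.log 2) x := by
  rw [hbin_eq]; exact (hasDerivAt_Nf hx).div_const _

lemma Lf_pos {x : ℝ} (h0 : 0 < x) (h2 : x < 1/2) : 0 < Lf x :=
  sub_pos.2 (Real.log_lt_log h0 (by linarith))

lemma hbin_zero : hbin 0 = 0 := by simp [hbin]

lemma hbin_half : hbin (1/2 : ℝ) = 1 := by
  have h : Real.logb 2 (1/2 : ℝ) = -1 := by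
    rw [show (1/2:ℝ) = 2⁻¹ by norm_num, Real.logb_inv, Real.logb_self_eq_one] <;> norm_num
  rw [hbin, show (1:ℝ) - 1/2 = 1/2 by norm_num, h]; ring

lemma strictMonoOn_hbin : StrictMonoOn hbin (Icc (0:ℝ) (1/2)) := by
  apply strictMonoOn_of_deriv_pos (convex_Icc _ _) continuous_hbin.continuousOn
  intro x hx
  rw [interior_Icc] at hx
  rw [(hasDerivAt_hbin ⟨hx.1, by linarith [hx.2]⟩).deriv]
  exact div_pos (Lf_pos hx.1 hx.2) (Real.log_pos one_lt_two)

lemma hasDerivAt_Lf {x : ℝ} (hx : x ∈ Ioo (0:ℝ) 1) :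
    HasDerivAt Lf (-(x * (1 - x))⁻¹) x := by
  have hx0 : x ≠ 0 := ne_of_gt hx.1
  have hx1 : (1:ℝ) - x ≠ 0 := by have := hx.2; intro h; linarith [h]
  have hinner : HasDerivAt (fun y : ℝ => 1 - y) (-1) x := by
    simpa using (hasDerivAt_id x).const_sub 1
  have h1 : HasDerivAt (fun y : ℝ => Real.log (1 - y)) ((1 - x)⁻¹ * (-1)) x :=
    (Real.hasDerivAt_log hx1).comp x hinner
  have h2 := h1.sub (Real.hasDerivAt_log hx0)
  have : Lf = fun y : ℝ => Real.log (1 - y) - Real.log y := rfl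
  rw [this]
  refine h2.congr_deriv ?_
  field_simp
  ring

lemma continuous_Mf : Continuous Mf := by
  have h := Real.continuous_mul_log
  have : Mf = fun x => x * ((1 - x) * Real.log (1 - x)) - (1 - x) * (x * Real.log x) := by
    funext x; unfold Mf Lf; ring
  rw [this]
  exact (continuous_id.mul (h.comp (continuous_const.sub continuous_id))).sub
    ((continuous_const.sub continuous_id).mul h)

lemma Mf_half : Mf (1/2 : ℝ) = 0 := by norm_num [Mf, Lf]

lemma concave_Mf : ConcaveOn ℝ (Icc (0:ℝ) (1/2)) Mf := by
  apply concaveOn_of_hasDerivWithinAt2_nonpos (convex_Icc _ _) continuous_Mf.continuousOn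
    (f' := fun x => (1 - 2*x) * Lf x - 1)
    (f'' := fun x => -2 * Lf x - (1 - 2*x) * (x * (1 - x))⁻¹)
  · intro x hx
    rw [interior_Icc] at hx
    have hx1 : x ∈ Ioo (0:ℝ) 1 := ⟨hx.1, by linarith [hx.2]⟩
    have hne : x * (1 - x) ≠ 0 := by
      have : 0 < x * (1 - x) := mul_pos hx1.1 (by linarith [hx1.2])
      exact ne_of_gt this
    have hq : HasDerivAt (fun y : ℝ => y * (1 - y)) (1 * (1 - x) + x * (-1)) x := by
      exact (hasDerivAt_id x).mul (by simpa using (hasDerivAt_id x).const_sub 1)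
    have h := hq.mul (hasDerivAt_Lf hx1)
    have hMf : Mf = fun y : ℝ => y * (1 - y) * Lf y := rfl
    rw [hMf]
    refine HasDerivAt.hasDerivWithinAt ?_
    refine h.congr_deriv ?_
    simp only [mul_neg, mul_inv_cancel₀ hne]
    ring
  · intro x hx
    rw [interior_Icc] at hx
    have hx1 : x ∈ Ioo (0:ℝ) 1 := ⟨hx.1, by linarith [hx.2]⟩
    have hlin : HasDerivAt (fun y : ℝ => 1 - 2*y) (-2) x := by
      simpa using ((hasDerivAt_id x).const_mul 2).const_sub 1
    have h := (hlin.mul (hasDerivAt_Lf hx1)).sub_const 1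
    refine HasDerivAt.hasDerivWithinAt ?_
    refine h.congr_deriv ?_
    ring
  · intro x hx
    rw [interior_Icc] at hx
    have h1 : 0 < Lf x := Lf_pos hx.1 hx.2
    have h2 : 0 < (1:ℝ) - 2*x := by linarith [hx.2]
    have h3 : 0 < (x * (1 - x))⁻¹ :=
      inv_pos.2 (mul_pos hx.1 (by linarith [hx.2]))
    nlinarith

lemma key_ineq {p x : ℝ} (hp : p ∈ Icc (0:ℝ) (1/2)) (hx : x ∈ Ioo (0:ℝ) (1/2)) :
    (1 - 2*p) * Mf x ≤ Mf (p + (1 - 2*p) * x) := by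
  have hxI : x ∈ Icc (0:ℝ) (1/2) := Ioo_subset_Icc_self hx
  have hhalf : (1/2 : ℝ) ∈ Icc (0:ℝ) (1/2) := by constructor <;> norm_num
  have ha : (0:ℝ) ≤ 1 - 2*p := by linarith [hp.2]
  have hb : (0:ℝ) ≤ 2*p := by linarith [hp.1]
  have hab : (1 - 2*p) + 2*p = 1 := by ring
  have h := concave_Mf.2 hxI hhalf ha hb hab
  simp only [smul_eq_mul, Mf_half] at h
  rw [show (1 - 2*p) * x + 2*p * (1/2) = p + (1 - 2*p) * x by ring] at h
  linarith

lemma y_mem {p x : ℝ} (hp : p ∈ Icc (0:ℝ) (1/2)) (hx : x ∈ Ioo (0:ℝ) (1/2)) :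
    0 < p + (1 - 2*p) * x ∧ p + (1 - 2*p) * x ≤ 1/2 := by
  obtain ⟨hp0, hp2⟩ := hp
  obtain ⟨hx0, hx2⟩ := hx
  constructor <;> nlinarith

lemma mono_F {p : ℝ} (hp : p ∈ Icc (0:ℝ) (1/2)) :
    MonotoneOn (fun x => (1 - 2*p) * Lf (p + (1 - 2*p) * x) / Lf x) (Ioo (0:ℝ) (1/2)) := by
  set c := 1 - 2*p with hc_def
  have hc : 0 ≤ c := by have := hp.2; simp only [hc_def]; linarith
  have hder : ∀ x ∈ Ioo (0:ℝ) (1/2),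
      HasDerivAt (fun x => c * Lf (p + c * x) / Lf x)
        ((c * (-(((p + c*x) * (1 - (p + c*x)))⁻¹) * c) * Lf x
          - c * Lf (p + c*x) * (-(x * (1 - x))⁻¹)) / (Lf x)^2) x := by
    intro x hx
    have hy : 0 < p + c * x ∧ p + c * x ≤ 1/2 := y_mem hp hx
    have hyI : p + c * x ∈ Ioo (0:ℝ) 1 := ⟨hy.1, lt_of_le_of_lt hy.2 (by norm_num)⟩
    have hxI : x ∈ Ioo (0:ℝ) 1 := ⟨hx.1, by linarith [hx.2]⟩
    have hLx : Lf x ≠ 0 := ne_of_gt (Lf_pos hx.1 hx.2)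
    have hinner : HasDerivAt (fun y : ℝ => p + c * y) c x := by
      simpa using ((hasDerivAt_id x).const_mul c).const_add p
    have hnum : HasDerivAt (fun y : ℝ => c * Lf (p + c * y))
        (c * (-(((p + c*x) * (1 - (p + c*x)))⁻¹) * c)) x := by
      exact (((hasDerivAt_Lf hyI).comp x hinner)).const_mul c
    exact hnum.div (hasDerivAt_Lf hxI) hLx
  apply monotoneOn_of_hasDerivWithinAt_nonneg (convex_Ioo _ _)
    (f' := fun x => ((c * (-(((p + c*x) * (1 - (p + c*x)))⁻¹) * c) * Lf x
          - c * Lf (p + c*x) * (-(x * (1 - x))⁻¹)) / (Lf x)^2))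
  · intro x hx
    exact ((hder x hx).differentiableAt.continuousAt).continuousWithinAt
  · rw [interior_Ioo]
    intro x hx
    exact (hder x hx).hasDerivWithinAt
  · rw [interior_Ioo]
    intro x hx
    have hy : 0 < p + c * x ∧ p + c * x ≤ 1/2 := y_mem hp hx
    set y := p + c * x with hy_def
    have hxx : 0 < x * (1 - x) := mul_pos hx.1 (by linarith [hx.2])
    have hyy : 0 < y * (1 - y) := mul_pos hy.1 (by nlinarith [hy.2])
    have hkey : c * Mf x ≤ Mf y := key_ineq hp hx
    have hMfx : Mf x = x * (1 - x) * Lf x := rfl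
    have hMfy : Mf y = y * (1 - y) * Lf y := rfl
    apply div_nonneg _ (sq_nonneg _)
    have heq : c * (-((y * (1 - y))⁻¹) * c) * Lf x - c * Lf y * (-(x * (1 - x))⁻¹)
        = c * (Mf y - c * Mf x) * ((x * (1 - x))⁻¹ * (y * (1 - y))⁻¹) := by
      rw [hMfx, hMfy]
      have hxx' := hxx.ne'
      have hyy' := hyy.ne'
      linear_combination (-(c * Lf y * (x * (1 - x))⁻¹)) * mul_inv_cancel₀ hyy' + (c^2 * Lf x * (y * (1 - y))⁻¹) * mul_inv_cancel₀ hxx'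
    rw [heq]
    have : 0 ≤ Mf y - c * Mf x := by linarith
    positivity

/-- For fixed `p ∈ [0,1/2]`, `g(t) = h(p ⋆ h⁻¹(1-t)) - (1-t)` is convex on `[0,1]`,
and consequently `g(t) ≤ t·h(p)` for all `t ∈ [0,1]`. -/
theorem g_convex_and_le (hinv : ℝ → ℝ)
    (hhinv : ∀ y ∈ Set.Icc (0:ℝ) 1, hinv y ∈ Set.Icc (0:ℝ) (1/2) ∧ hbin (hinv y) = y)
    (p : ℝ) (hp : p ∈ Set.Icc (0:ℝ) (1/2)) :
    ConvexOn ℝ (Set.Icc (0:ℝ) 1) (fun t => hbin (bconv p (hinv (1 - t))) - (1 - t)) ∧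
    ∀ t ∈ Set.Icc (0:ℝ) 1, hbin (bconv p (hinv (1 - t))) - (1 - t) ≤ t * hbin p := by
  have hmem0 : (0:ℝ) ∈ Icc (0:ℝ) (1/2) := by norm_num
  have hmemh : (1/2:ℝ) ∈ Icc (0:ℝ) (1/2) := by norm_num
  have hinj := strictMonoOn_hbin.injOn
  -- basic facts about hinv
  have h01 : (0:ℝ) ∈ Icc (0:ℝ) 1 := by norm_num
  have h11 : (1:ℝ) ∈ Icc (0:ℝ) 1 := by norm_num
  have hinv0 : hinv 0 = 0 := by
    apply hinj (hhinv 0 h01).1 hmem0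
    rw [(hhinv 0 h01).2, hbin_zero]
  have hinv1 : hinv 1 = 1/2 := by
    apply hinj (hhinv 1 h11).1 hmemh
    rw [(hhinv 1 h11).2, hbin_half]
  have hsm : StrictMonoOn hinv (Icc (0:ℝ) 1) := by
    intro y1 hy1 y2 hy2 h12
    by_contra hle
    push_neg at hle
    have := strictMonoOn_hbin.monotoneOn (hhinv y2 hy2).1 (hhinv y1 hy1).1 hle
    rw [(hhinv y1 hy1).2, (hhinv y2 hy2).2] at this
    linarith
  have himage : Icc (0:ℝ) (1/2) ⊆ hinv '' (Icc 0 1) := by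
    intro x hx
    have hbx : hbin x ∈ Icc (0:ℝ) 1 := by
      constructor
      · rw [← hbin_zero]
        exact strictMonoOn_hbin.monotoneOn hmem0 hx hx.1
      · rw [← hbin_half]
        exact strictMonoOn_hbin.monotoneOn hx hmemh hx.2
    refine ⟨hbin x, hbx, ?_⟩
    apply hinj (hhinv _ hbx).1 hx
    rw [(hhinv _ hbx).2]
  have hinv_mem_Ioo : ∀ u ∈ Ioo (0:ℝ) 1, hinv u ∈ Ioo (0:ℝ) (1/2) := by
    intro u hu
    constructor
    · rw [← hinv0]; exact hsm h01 (Ioo_subset_Icc_self hu) hu.1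
    · rw [← hinv1]; exact hsm (Ioo_subset_Icc_self hu) h11 hu.2
  -- continuity of hinv on [0,1]
  have hcont : ContinuousOn hinv (Icc (0:ℝ) 1) := by
    intro a ha
    rcases eq_or_lt_of_le ha.1 with h0 | h0
    · have : a = 0 := h0.symm
      subst this
      refine ContinuousWithinAt.mono ?_ (Icc_subset_Ici_self)
      apply hsm.continuousWithinAt_right_of_image_mem_nhdsWithin
        (Icc_mem_nhdsGE_of_mem (by constructor <;> norm_num))
      rw [hinv0]
      exact Filter.mem_of_superset (Icc_mem_nhdsGE_of_mem (b := (0:ℝ)) (by constructor <;> norm_num))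
        himage
    · rcases eq_or_lt_of_le ha.2 with h1 | h1
      · subst h1
        refine ContinuousWithinAt.mono ?_ (Icc_subset_Iic_self)
        apply hsm.continuousWithinAt_left_of_image_mem_nhdsWithin
          (Icc_mem_nhdsLE_of_mem (by constructor <;> norm_num))
        rw [hinv1]
        exact Filter.mem_of_superset (Icc_mem_nhdsLE_of_mem (b := (1/2:ℝ)) (by constructor <;> norm_num))
          himage
      · apply ContinuousAt.continuousWithinAt
        apply hsm.continuousAt_of_image_mem_nhds (Icc_mem_nhds h0 h1)
        have hm := hinv_mem_Ioo a ⟨h0, h1⟩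
        exact Filter.mem_of_superset (Icc_mem_nhds hm.1 hm.2) himage
  -- derivative of hinv
  have hasDerivAt_hinv : ∀ u ∈ Ioo (0:ℝ) 1,
      HasDerivAt hinv (Lf (hinv u) / Real.log 2)⁻¹ u := by
    intro u hu
    have hm := hinv_mem_Ioo u hu
    apply HasDerivAt.of_local_left_inverse
      (hcont.continuousAt (Icc_mem_nhds hu.1 hu.2))
      (hasDerivAt_hbin ⟨hm.1, by linarith [hm.2]⟩)
    · exact ne_of_gt (div_pos (Lf_pos hm.1 hm.2) (Real.log_pos one_lt_two))
    · filter_upwards [Icc_mem_nhds hu.1 hu.2] with y hy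
      exact (hhinv y hy).2
  -- psi
  set ψ : ℝ → ℝ := fun u => hbin (bconv p (hinv u)) with hψ_def
  have hbconv : ∀ x : ℝ, bconv p x = p + (1 - 2*p) * x := by
    intro x; unfold bconv; ring
  have hasDerivAt_ψ : ∀ u ∈ Ioo (0:ℝ) 1,
      HasDerivAt ψ ((1 - 2*p) * Lf (p + (1 - 2*p) * hinv u) / Lf (hinv u)) u := by
    intro u hu
    have hm := hinv_mem_Ioo u hu
    have hy : 0 < p + (1 - 2*p) * hinv u ∧ p + (1 - 2*p) * hinv u ≤ 1/2 := y_mem hp hm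
    have hyI : p + (1 - 2*p) * hinv u ∈ Ioo (0:ℝ) 1 :=
      ⟨hy.1, lt_of_le_of_lt hy.2 (by norm_num)⟩
    have hinner : HasDerivAt (fun v => p + (1 - 2*p) * hinv v)
        ((1 - 2*p) * (Lf (hinv u) / Real.log 2)⁻¹) u :=
      ((hasDerivAt_hinv u hu).const_mul _).const_add p
    have houter := hasDerivAt_hbin hyI
    have h := houter.comp u hinner
    have hψeq : ψ = fun v => hbin (p + (1 - 2*p) * hinv v) := by
      funext v; rw [hψ_def]; simp only [hbconv]
    rw [hψeq]
    refine h.congr_deriv ?_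
    have hLx : Lf (hinv u) ≠ 0 := ne_of_gt (Lf_pos hm.1 hm.2)
    have hl2 : Real.log 2 ≠ 0 := ne_of_gt (Real.log_pos one_lt_two)
    field_simp
  have hψcont : ContinuousOn ψ (Icc (0:ℝ) 1) := by
    apply continuous_hbin.comp_continuousOn
    have : (fun u => bconv p (hinv u)) = fun u => p * (1 - hinv u) + hinv u * (1 - p) := rfl
    rw [this]
    exact (continuousOn_const.mul (continuousOn_const.sub hcont)).add
      (hcont.mul continuousOn_const)
  have hψconv : ConvexOn ℝ (Icc (0:ℝ) 1) ψ := by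
    apply MonotoneOn.convexOn_of_deriv (convex_Icc _ _) hψcont
    · rw [interior_Icc]
      intro u hu
      exact ((hasDerivAt_ψ u hu).differentiableAt).differentiableWithinAt
    · rw [interior_Icc]
      intro u1 h1 u2 h2 h12
      rw [(hasDerivAt_ψ u1 h1).deriv, (hasDerivAt_ψ u2 h2).deriv]
      exact mono_F hp (hinv_mem_Ioo u1 h1) (hinv_mem_Ioo u2 h2)
        (hsm.monotoneOn (Ioo_subset_Icc_self h1) (Ioo_subset_Icc_self h2) h12)
  -- convexity of g
  have hgconv : ConvexOn ℝ (Icc (0:ℝ) 1)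
      (fun t => hbin (bconv p (hinv (1 - t))) - (1 - t)) := by
    constructor
    · exact convex_Icc _ _
    · intro x hx y hy a b ha hb hab
      have hx' : (1:ℝ) - x ∈ Icc (0:ℝ) 1 := ⟨by linarith [hx.2], by linarith [hx.1]⟩
      have hy' : (1:ℝ) - y ∈ Icc (0:ℝ) 1 := ⟨by linarith [hy.2], by linarith [hy.1]⟩
      have hcomb : 1 - (a * x + b * y) = a * (1 - x) + b * (1 - y) := by
        have : a + b = 1 := hab; linarith [mul_comm a x]
      have hψle := hψconv.2 hx' hy' ha hb hab
      simp only [smul_eq_mul] at hψle ⊢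
      have h1 : hbin (bconv p (hinv (1 - (a * x + b * y)))) = ψ (a * (1-x) + b * (1-y)) := by
        simp only [hψ_def]
        rw [← hcomb]
      rw [h1]
      calc ψ (a * (1-x) + b * (1-y)) - (1 - (a * x + b * y))
          ≤ (a * ψ (1-x) + b * ψ (1-y)) - (a * (1-x) + b * (1-y)) := by
            rw [hcomb]; linarith [hψle]
        _ = a * (ψ (1-x) - (1-x)) + b * (ψ (1-y) - (1-y)) := by ring
        _ = a * (hbin (bconv p (hinv (1 - x))) - (1 - x))
            + b * (hbin (bconv p (hinv (1 - y))) - (1 - y)) := rfl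
  refine ⟨hgconv, ?_⟩
  -- endpoint values
  have hg0 : hbin (bconv p (hinv (1 - 0))) - (1 - (0:ℝ)) = 0 := by
    norm_num [hinv1]
    rw [show bconv p (1/2) = 1/2 by unfold bconv; ring, hbin_half]
    ring
  have hg1 : hbin (bconv p (hinv (1 - 1))) - (1 - (1:ℝ)) = hbin p := by
    norm_num [hinv0]
    rw [show bconv p 0 = p by unfold bconv; ring]
  intro t ht
  have h := hgconv.2 h01 h11 (by linarith [ht.2] : (0:ℝ) ≤ 1 - t) ht.1 (by ring)
  simp only [smul_eq_mul] at h
  rw [show (1 - t) * 0 + t * 1 = t by ring] at h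
  rw [hg0, hg1] at h
  calc hbin (bconv p (hinv (1 - t))) - (1 - t) ≤ (1 - t) * 0 + t * hbin p := h
    _ = t * hbin p := by ring
end
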